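/- Let m ∈ ℝ^K be a probability vector with all entries strictly positive, and let ᾱ_s, ᾱ_{t|s} ∈ (0,1) with ᾱ_t := ᾱ_s ᾱ_{t|s}. Set A = ᾱ_s I + (1−ᾱ_s) 1 mᵀ and B = ᾱ_{t|s} I + (1−ᾱ_{t|s}) 1 mᵀ. For one-hot vectors x_0, x_t ∈ ℝ^K, define the posterior vector v := (B x_t ⊙ Aᵀ x_0) / ⟨x_t, (AB)ᵀ x_0⟩. Then: (i) if x_t = x_0, v = (1−λ_{t|s}) x_t + λ_{t|s} m, where λ_{t|s} := (1−ᾱ_s)(1−ᾱ_{t|s}) ⟨m, x_t⟩ / (ᾱ_t + (1−ᾱ_t) ⟨m, x_t⟩); and (ii) if x_t ≠ x_0, v = (1−μ_{t|s}) x_0 + μ_{t|s} ᾱ_{t|s} x_t + μ_{t|s}(1−ᾱ_{t|s}) m, where μ_{t|s} := (1−ᾱ_s)/(1−ᾱ_t). -/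

import Mathlib

/-- The Bayes posterior vector `v = (B xt ⊙ Aᵀ x0) / ⟨xt, (AB)ᵀ x0⟩` of the
discrete-diffusion forward chain, with `A = ᾱ_s I + (1-ᾱ_s) 1mᵀ` and
`B = ᾱ_{t|s} I + (1-ᾱ_{t|s}) 1mᵀ`. -/
noncomputable def postVec {K : ℕ} (m : Fin K → ℝ) (as ats : ℝ) (xt x0 : Fin K → ℝ) :
    Fin K → ℝ :=
  fun k =>
    ((ats • (1 : Matrix (Fin K) (Fin K) ℝ) + (1 - ats) • Matrix.vecMulVec (1 : Fin K → ℝ) m).mulVec xt k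
        * (as • (1 : Matrix (Fin K) (Fin K) ℝ) + (1 - as) • Matrix.vecMulVec (1 : Fin K → ℝ) m).transpose.mulVec x0 k)
      / (∑ j, xt j *
          (((as • (1 : Matrix (Fin K) (Fin K) ℝ) + (1 - as) • Matrix.vecMulVec (1 : Fin K → ℝ) m)
            * (ats • (1 : Matrix (Fin K) (Fin K) ℝ) + (1 - ats) • Matrix.vecMulVec (1 : Fin K → ℝ) m)).transpose.mulVec x0) j)

/-- Closed form of the posterior `q(x_s | x_t, x_0)` of discrete diffusion:
if `x_t = x_0` it is `(1-λ_{t|s}) x_t + λ_{t|s} m`, and if `x_t ≠ x_0` it is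
`(1-μ_{t|s}) x_0 + μ_{t|s} ᾱ_{t|s} x_t + μ_{t|s}(1-ᾱ_{t|s}) m`. -/
lemma postVec_single {K : ℕ} (m : Fin K → ℝ) (hm_sum : ∑ k, m k = 1)
    (as ats : ℝ) (i0 j0 k : Fin K) :
    postVec m as ats (Pi.single i0 1) (Pi.single j0 1) k =
      ((ats * (if k = i0 then 1 else 0) + (1 - ats) * m i0)
        * (as * (if j0 = k then 1 else 0) + (1 - as) * m k))
      / (as * ats * (if j0 = i0 then 1 else 0) + (1 - as * ats) * m i0) := by
  unfold postVec
  simp only [Matrix.mulVec_single, Matrix.transpose_apply, Matrix.add_apply, Matrix.smul_apply,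
    Matrix.one_apply, Matrix.vecMulVec_apply, smul_eq_mul, Pi.one_apply, mul_one,
    Pi.single_apply, ite_mul, one_mul, zero_mul, Finset.sum_ite_eq, Finset.mem_univ, if_true,
    Matrix.mul_apply, MulOpposite.op_one, one_smul, Matrix.col_apply]
  congr 1
  rw [Finset.sum_ite_eq' Finset.univ i0]
  simp only [Finset.mem_univ, if_true]
  have expand : ∀ x1 : Fin K,
      ((as * if j0 = x1 then 1 else 0) + (1 - as) * m x1) * ((ats * if x1 = i0 then 1 else 0) + (1 - ats) * m i0)
      = (if j0 = x1 then (if x1 = i0 then as * ats else 0) + as * (1 - ats) * m i0 else 0)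
        + (if x1 = i0 then (1 - as) * ats * m x1 else 0)
        + (1 - as) * (1 - ats) * m i0 * m x1 := by
    intro x1
    by_cases h2 : x1 = i0
    · subst h2; by_cases h1 : j0 = x1 <;> simp [h1] <;> ring
    · by_cases h1 : j0 = x1 <;> simp [h1, h2] <;> ring
  rw [Finset.sum_congr rfl (fun x1 _ => expand x1)]
  rw [Finset.sum_add_distrib, Finset.sum_add_distrib, Finset.sum_ite_eq Finset.univ j0,
    Finset.sum_ite_eq' Finset.univ i0, ← Finset.mul_sum, hm_sum]
  by_cases h : j0 = i0 <;> simp [h] <;> ring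

theorem posterior_closed_form
    {K : ℕ} (hK : 1 ≤ K) (m : Fin K → ℝ)
    (hm_pos : ∀ k, 0 < m k) (hm_sum : ∑ k, m k = 1)
    (as ats : ℝ) (has : 0 < as ∧ as < 1) (hats : 0 < ats ∧ ats < 1)
    (x0 xt : Fin K → ℝ)
    (hx0 : ∃ i, x0 = Pi.single i 1) (hxt : ∃ i, xt = Pi.single i 1) :
    (xt = x0 →
      ∀ k, postVec m as ats xt x0 k
        = (1 - (1 - as) * (1 - ats) * (∑ i, m i * xt i)
              / (as * ats + (1 - as * ats) * ∑ i, m i * xt i)) * xt k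
          + ((1 - as) * (1 - ats) * (∑ i, m i * xt i)
              / (as * ats + (1 - as * ats) * ∑ i, m i * xt i)) * m k)
    ∧ (xt ≠ x0 →
      ∀ k, postVec m as ats xt x0 k
        = (1 - (1 - as) / (1 - as * ats)) * x0 k
          + ((1 - as) / (1 - as * ats)) * ats * xt k
          + ((1 - as) / (1 - as * ats)) * (1 - ats) * m k) := by
  obtain ⟨j0, rfl⟩ := hx0
  obtain ⟨i0, rfl⟩ := hxt
  have hprod : 0 < as * ats := mul_pos has.1 hats.1
  have hlt : as * ats < 1 := by
    calc as * ats < 1 * 1 := by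
          apply mul_lt_mul'' has.2 hats.2 has.1.le hats.1.le
      _ = 1 := by ring
  have h1m : (0:ℝ) < 1 - as * ats := by linarith
  have hsum : (∑ i, m i * (Pi.single i0 1 : Fin K → ℝ) i) = m i0 := by
    simp [Pi.single_apply, mul_ite, Finset.sum_ite_eq', Finset.mem_univ]
  constructor
  · intro heq k
    have hij : i0 = j0 := by
      by_contra h
      have := congrFun heq i0
      simp [Pi.single_apply, h] at this
    subst hij
    rw [postVec_single m hm_sum as ats i0 i0 k, hsum]
    have hD : as * ats + (1 - as * ats) * m i0 ≠ 0 := by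
      have := hm_pos i0
      positivity
    simp only [if_pos rfl, Pi.single_apply, eq_self_iff_true, if_true]
    by_cases hk : k = i0
    · subst hk
      simp only [if_pos rfl, ↓reduceIte]
      simp only [div_eq_mul_inv]
      linear_combination mul_inv_cancel₀ hD
    · have hk' : ¬ (i0 = k) := fun h => hk h.symm
      simp only [if_neg hk, if_neg hk']
      field_simp
      ring
  · intro hne k
    have hij : i0 ≠ j0 := by
      rintro rfl
      exact hne rfl
    have hij' : ¬ (j0 = i0) := fun h => hij h.symm
    rw [postVec_single m hm_sum as ats i0 j0 k]
    have hD : (1 - as * ats) * m i0 ≠ 0 := by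
      have := hm_pos i0
      positivity
    have hD1 : 1 - as * ats ≠ 0 := h1m.ne'
    have hm0 : m i0 ≠ 0 := (hm_pos i0).ne'
    simp only [if_neg hij', Pi.single_apply, mul_zero, zero_add]
    by_cases hk : k = i0
    · have hkj : ¬ (k = j0) := by rw [hk]; exact hij
      have hjk : ¬ (j0 = k) := fun h => hkj h.symm
      simp only [if_pos hk, if_neg hkj, if_neg hjk]
      subst hk
      field_simp
      ring
    · by_cases hk2 : k = j0
      · have hjk : j0 = k := hk2.symm
        simp only [if_neg hk, if_pos hk2, if_pos hjk]
        subst hk2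
        simp only [div_eq_mul_inv, mul_inv]
        linear_combination ((1 - as * ats)⁻¹ * (1 - ats) * (as + (1 - as) * m k)) * mul_inv_cancel₀ hm0 + mul_inv_cancel₀ hD1
      · have hjk : ¬ (j0 = k) := fun h => hk2 h.symm
        simp only [if_neg hk, if_neg hk2, if_neg hjk]
        field_simp
        ring
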